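/- Let k be a field of characteristic zero and let R be a finite-dimensional k-algebra. Then the Jacobson radical of R equals the kernel of the trace bilinear form: an element x ∈ R lies in the Jacobson radical of R if and only if tr_{R/k}(x·y) = 0 for every y ∈ R. -/

import Mathlib

open LinearMap Module Set

/-- If all power sums (with nonzero weights) of a finite set of nonzero elements of a
characteristic-zero field vanish, the set is empty. -/
private lemma powersum_eq_empty {L : Type*} [Field L] :
    ∀ (s : Finset L), (∀ x ∈ s, x ≠ 0) → ∀ d : L → L, (∀ x ∈ s, d x ≠ 0) →
      (∀ n : ℕ, ∑ x ∈ s, d x * x ^ (n + 1) = 0) → s = ∅ := by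
  intro s
  induction s using Finset.strongInduction with
  | _ s ih =>
    intro h0 d hd hsum
    classical
    rcases s.eq_empty_or_nonempty with rfl | ⟨μ, hμ⟩
    · rfl
    exfalso
    have herase : s.erase μ = ∅ := by
      refine ih (s.erase μ) (Finset.erase_ssubset hμ)
        (fun x hx => h0 x (Finset.mem_of_mem_erase hx))
        (fun x => d x * (x - μ)) ?_ ?_
      · intro x hx
        exact mul_ne_zero (hd x (Finset.mem_of_mem_erase hx))
          (sub_ne_zero.mpr (Finset.ne_of_mem_erase hx))
      · intro n
        have hzero : d μ * (μ - μ) * μ ^ (n + 1) = 0 := by ring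
        rw [Finset.sum_erase (f := fun x => d x * (x - μ) * x ^ (n + 1)) s hzero]
        have expand : ∀ x : L, d x * (x - μ) * x ^ (n + 1)
            = d x * x ^ (n + 1 + 1) - μ * (d x * x ^ (n + 1)) := by
          intro x; ring
        simp_rw [expand]
        rw [Finset.sum_sub_distrib, ← Finset.mul_sum, hsum (n + 1), hsum n, mul_zero, sub_zero]
    have hsμ : s = {μ} := by
      rcases (Finset.erase_eq_empty_iff s μ).mp herase with h | h
      · exact absurd (h ▸ hμ) (Finset.notMem_empty μ)
      · exact h
    have h1 := hsum 0
    rw [hsμ, Finset.sum_singleton, pow_one] at h1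
    exact (mul_ne_zero (hd μ hμ) (h0 μ hμ)) h1

private lemma trace_algebraMap_end {L W : Type*} [Field L] [AddCommGroup W] [Module L W]
    [FiniteDimensional L W] (a : L) :
    trace L W (algebraMap L (Module.End L W) a) = a * (finrank L W : L) := by
  rw [Algebra.algebraMap_eq_smul_one, map_smul, trace_one, smul_eq_mul]

private lemma isNilpotent_pow_sub_algebraMap {L W : Type*} [Field L] [AddCommGroup W] [Module L W]
    (g : Module.End L W) (μ : L) (hg : IsNilpotent (g - algebraMap L (Module.End L W) μ)) :
    ∀ n : ℕ, IsNilpotent (g ^ n - algebraMap L (Module.End L W) (μ ^ n)) := by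
  intro n
  induction n with
  | zero => simp
  | succ n ih =>
    have h1 : algebraMap L (Module.End L W) (μ ^ n) * g
        = g * algebraMap L (Module.End L W) (μ ^ n) :=
      (Algebra.commute_algebraMap_left (μ ^ n) g).eq
    have h2 : algebraMap L (Module.End L W) (μ ^ n) * algebraMap L (Module.End L W) μ
        = algebraMap L (Module.End L W) (μ ^ (n + 1)) := by rw [← map_mul, ← pow_succ]
    have e : g ^ (n + 1) - algebraMap L (Module.End L W) (μ ^ (n + 1))
        = g * (g ^ n - algebraMap L (Module.End L W) (μ ^ n))
          + algebraMap L (Module.End L W) (μ ^ n) * (g - algebraMap L (Module.End L W) μ) := by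
      rw [mul_sub, mul_sub, h1, h2]
      conv_lhs => rw [pow_succ']
      abel
    rw [e]
    have c1 : Commute g (g ^ n - algebraMap L (Module.End L W) (μ ^ n)) :=
      ((Commute.refl g).pow_right n).sub_right (Algebra.commute_algebraMap_right _ g)
    have c2 : Commute (algebraMap L (Module.End L W) (μ ^ n))
        (g - algebraMap L (Module.End L W) μ) := Algebra.commute_algebraMap_left _ _
    have t1 : IsNilpotent (g * (g ^ n - algebraMap L (Module.End L W) (μ ^ n))) :=
      c1.isNilpotent_mul_left ih
    have t2 : IsNilpotent (algebraMap L (Module.End L W) (μ ^ n)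
        * (g - algebraMap L (Module.End L W) μ)) := c2.isNilpotent_mul_left hg
    refine Commute.isNilpotent_add ?_ t1 t2
    refine Commute.mul_right (Algebra.commute_algebraMap_left _ _).symm ?_
    · exact Commute.mul_left
        ((Commute.refl g).sub_right (Algebra.commute_algebraMap_right _ g))
        (Commute.sub_left
          (Commute.sub_right ((Commute.refl g).pow_left n)
            (Algebra.commute_algebraMap_right _ _))
          (Commute.sub_right (Algebra.commute_algebraMap_left _ _)
            (Algebra.commute_algebraMap_left _ _)))

private lemma trace_pow_restrict_max {L V : Type*} [Field L] [AddCommGroup V]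
    [Module L V] [FiniteDimensional L V] (f : Module.End L V) (μ : L) (n : ℕ)
    (hmap : Set.MapsTo (f ^ n) (f.maxGenEigenspace μ) (f.maxGenEigenspace μ)) :
    trace L (f.maxGenEigenspace μ) ((f ^ n).restrict hmap) =
      μ ^ n * (finrank L (f.maxGenEigenspace μ) : L) := by
  have h1 : ∀ x ∈ f.maxGenEigenspace μ, f x ∈ f.maxGenEigenspace μ :=
    f.mapsTo_maxGenEigenspace_of_comm rfl μ
  set g := f.restrict h1 with hgdef
  have h2 : Set.MapsTo (f - algebraMap L (Module.End L V) μ)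
      (f.maxGenEigenspace μ) (f.maxGenEigenspace μ) :=
    f.mapsTo_maxGenEigenspace_of_comm (Algebra.mul_sub_algebraMap_commutes f μ) μ
  have hg : IsNilpotent (g - algebraMap L (Module.End L (f.maxGenEigenspace μ)) μ) := by
    have heq : g - algebraMap L (Module.End L (f.maxGenEigenspace μ)) μ
        = (f - algebraMap L (Module.End L V) μ).restrict h2 := by
      ext x
      simp [hgdef, LinearMap.restrict_apply, Algebra.algebraMap_eq_smul_one]
    rw [heq]
    exact f.isNilpotent_restrict_maxGenEigenspace_sub_algebraMap μ h2
  have hgr : (f ^ n).restrict hmap = g ^ n := (Module.End.pow_restrict n h1).symm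
  have hnil := isNilpotent_pow_sub_algebraMap g μ hg n
  have hsplit : g ^ n = algebraMap L (Module.End L (f.maxGenEigenspace μ)) (μ ^ n)
      + (g ^ n - algebraMap L (Module.End L (f.maxGenEigenspace μ)) (μ ^ n)) := by abel
  rw [hgr, hsplit, map_add, trace_algebraMap_end,
    (LinearMap.isNilpotent_trace_of_isNilpotent hnil).eq_zero, add_zero]

private lemma isNilpotent_of_trace_pow_eq_zero_aux {L V : Type*} [Field L] [CharZero L]
    [IsAlgClosed L] [AddCommGroup V] [Module L V] [FiniteDimensional L V] (f : Module.End L V)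
    (h : ∀ n : ℕ, trace L V (f ^ (n + 1)) = 0) : IsNilpotent f := by
  classical
  have hds := DirectSum.isInternal_submodule_of_iSupIndep_of_iSup_eq_top
    f.independent_maxGenEigenspace f.iSup_maxGenEigenspace_eq_top
  have h_fin : {μ : L | f.maxGenEigenspace μ ≠ ⊥}.Finite :=
    WellFoundedGT.finite_ne_bot_of_iSupIndep f.independent_maxGenEigenspace
  have hmap : ∀ (n : ℕ) (μ : L),
      Set.MapsTo (f ^ n) (f.maxGenEigenspace μ) (f.maxGenEigenspace μ) :=
    fun n μ => f.mapsTo_maxGenEigenspace_of_comm ((Commute.refl f).pow_right n) μ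
  have hsum : ∀ n : ℕ, ∑ μ ∈ h_fin.toFinset,
      (finrank L (f.maxGenEigenspace μ) : L) * μ ^ (n + 1) = 0 := by
    intro n
    have ht := LinearMap.trace_eq_sum_trace_restrict' hds h_fin (hmap (n + 1))
    rw [h n] at ht
    rw [ht]
    apply Finset.sum_congr rfl
    intro μ _
    rw [trace_pow_restrict_max f μ (n + 1) (hmap (n + 1) μ), mul_comm]
  set s := h_fin.toFinset.erase 0 with hs_def
  have hs : s = ∅ := by
    refine powersum_eq_empty s (fun x hx => Finset.ne_of_mem_erase hx)
      (fun μ => (finrank L (f.maxGenEigenspace μ) : L)) ?_ ?_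
    · intro μ hμ
      have hne : f.maxGenEigenspace μ ≠ ⊥ :=
        h_fin.mem_toFinset.mp (Finset.mem_of_mem_erase hμ)
      have : Nontrivial (f.maxGenEigenspace μ) := Submodule.nontrivial_iff_ne_bot.mpr hne
      exact Nat.cast_ne_zero.mpr (Module.finrank_pos).ne'
    · intro n
      have hzero : (finrank L (f.maxGenEigenspace (0 : L)) : L) * (0 : L) ^ (n + 1) = 0 := by
        simp
      rw [hs_def, Finset.sum_erase
        (f := fun μ : L => (finrank L (f.maxGenEigenspace μ) : L) * μ ^ (n + 1))
        h_fin.toFinset hzero]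
      exact hsum n
  have hbot : ∀ μ : L, μ ≠ 0 → f.maxGenEigenspace μ = ⊥ := by
    intro μ hμ
    by_contra hne
    have hmem : μ ∈ s := Finset.mem_erase.mpr ⟨hμ, h_fin.mem_toFinset.mpr hne⟩
    rw [hs] at hmem
    exact absurd hmem (Finset.notMem_empty μ)
  have htop : f.maxGenEigenspace 0 = ⊤ := by
    rw [eq_top_iff, ← f.iSup_maxGenEigenspace_eq_top]
    apply iSup_le
    intro μ
    rcases eq_or_ne μ 0 with rfl | hμ
    · exact le_rfl
    · rw [hbot μ hμ]; exact bot_le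
  rw [LinearMap.isNilpotent_iff_charpoly, LinearMap.charpoly_eq_X_pow_iff]
  intro m
  have hm : m ∈ f.maxGenEigenspace 0 := htop ▸ Submodule.mem_top
  rw [Module.End.mem_maxGenEigenspace] at hm
  obtain ⟨kk, hk⟩ := hm
  exact ⟨kk, by simpa using hk⟩

private lemma isNilpotent_of_trace_pow_eq_zero {k V : Type*} [Field k] [CharZero k]
    [AddCommGroup V] [Module k V] [FiniteDimensional k V] (f : Module.End k V)
    (h : ∀ n : ℕ, trace k V (f ^ (n + 1)) = 0) : IsNilpotent f := by
  classical
  let L := AlgebraicClosure k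
  let b := Module.finBasis k V
  let E1 := LinearMap.toMatrixAlgEquiv b
  let σ : Matrix (Fin (finrank k V)) (Fin (finrank k V)) k
      →+* Matrix (Fin (finrank k V)) (Fin (finrank k V)) L := (algebraMap k L).mapMatrix
  let bL := Pi.basisFun L (Fin (finrank k V))
  let E2 := Matrix.toLinAlgEquiv bL
  have hE1 : ∀ g : Module.End k V, Matrix.trace (E1 g) = trace k V g := by
    intro g
    rw [LinearMap.trace_eq_matrix_trace k b]
    rfl
  have hE2 : ∀ A : Matrix (Fin (finrank k V)) (Fin (finrank k V)) L,
      trace L _ (E2 A) = Matrix.trace A := by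
    intro A
    rw [LinearMap.trace_eq_matrix_trace L bL]
    congr 1
    exact (LinearMap.toMatrixAlgEquiv bL).apply_symm_apply A
  have hσ : ∀ A, Matrix.trace (σ A) = algebraMap k L (Matrix.trace A) := by
    intro A
    exact (AddMonoidHom.map_trace (algebraMap k L) A).symm
  have hnil : IsNilpotent (E2 (σ (E1 f))) := by
    apply isNilpotent_of_trace_pow_eq_zero_aux
    intro n
    rw [← map_pow, hE2, ← map_pow, hσ, ← map_pow, hE1, h n, map_zero]
  have hnil2 : IsNilpotent (σ (E1 f)) := by
    obtain ⟨n, hn⟩ := hnil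
    have h0 : E2 ((σ (E1 f)) ^ n) = 0 := by rw [map_pow]; exact hn
    refine ⟨n, ?_⟩
    calc (σ (E1 f)) ^ n = E2.symm (E2 ((σ (E1 f)) ^ n)) := (E2.symm_apply_apply _).symm
      _ = 0 := by rw [h0, map_zero]
  have hnil3 : IsNilpotent (E1 f) := by
    obtain ⟨n, hn⟩ := hnil2
    have h0 : σ ((E1 f) ^ n) = 0 := by rw [map_pow]; exact hn
    refine ⟨n, ?_⟩
    ext i j
    apply (algebraMap k L).injective
    simpa [σ, Matrix.map_apply] using congrFun (congrFun h0 i) j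
  obtain ⟨n, hn⟩ := hnil3
  have h0 : E1 (f ^ n) = 0 := by rw [map_pow]; exact hn
  refine ⟨n, ?_⟩
  calc f ^ n = E1.symm (E1 (f ^ n)) := (E1.symm_apply_apply _).symm
    _ = 0 := by rw [h0, map_zero]

private lemma isNilpotent_of_mem_jacobson {R : Type*} [Ring R] [IsArtinian R R] {z : R}
    (hz : z ∈ Ideal.jacobson (⊥ : Ideal R)) : IsNilpotent z := by
  let c : ℕ →o (Ideal R)ᵒᵈ :=
    ⟨fun n => Ideal.span {z ^ n}, by
      apply monotone_nat_of_le_succ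
      intro n
      change Ideal.span {z ^ (n + 1)} ≤ Ideal.span {z ^ n}
      rw [Ideal.span_le, Set.singleton_subset_iff]
      have : z ^ (n + 1) = z • z ^ n := by rw [smul_eq_mul, ← pow_succ']
      rw [this]
      exact Submodule.smul_mem _ z (Ideal.subset_span rfl)⟩
  obtain ⟨n, hn⟩ := IsArtinian.monotone_stabilizes c
  have hmem : z ^ n ∈ Ideal.span {z ^ (n + 1)} := by
    have heq : Ideal.span {z ^ n} = Ideal.span {z ^ (n + 1)} := hn (n + 1) (Nat.le_succ n)
    rw [← heq]
    exact Ideal.subset_span rfl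
  obtain ⟨a, ha⟩ := Submodule.mem_span_singleton.mp hmem
  rw [smul_eq_mul] at ha
  obtain ⟨u, hu⟩ := Ideal.mem_jacobson_iff.mp hz (-a)
  rw [Ideal.mem_bot] at hu
  have key : u - u * a * z = 1 := by
    have h1 : u * -a * z + u - 1 = -(u * a * z) + u - 1 := by
      rw [mul_neg, neg_mul]
    rw [h1] at hu
    have := sub_eq_zero.mp hu
    rw [← this]
    abel
  refine ⟨n, ?_⟩
  calc z ^ n = 1 * z ^ n := (one_mul _).symm
    _ = (u - u * a * z) * z ^ n := by rw [key]
    _ = u * z ^ n - u * (a * (z * z ^ n)) := by rw [sub_mul]; noncomm_ring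
    _ = u * z ^ n - u * (a * z ^ (n + 1)) := by rw [← pow_succ']
    _ = 0 := by rw [ha, sub_self]



/-- For a finite-dimensional algebra `R` over a field `k` of characteristic
zero, the Jacobson radical of `R` (the intersection of the maximal left ideals of `R`) is the
kernel of the trace form: `x` lies in the Jacobson radical iff `tr_{R/k}(x·y) = 0` for all `y`,
where `tr_{R/k}(z)` is the trace of left multiplication by `z` on `R`. -/
theorem mem_jacobson_iff_trace_form (k R : Type*) [Field k] [CharZero k] [Ring R] [Algebra k R]
    [FiniteDimensional k R] (x : R) :
    x ∈ sInf {I : Ideal R | I.IsMaximal} ↔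
      ∀ y : R, LinearMap.trace k R (LinearMap.mulLeft k (x * y)) = 0 := by
  have hart : IsArtinian R R := isArtinian_of_tower k inferInstance
  have hset : {I : Ideal R | I.IsMaximal} = {J : Ideal R | ⊥ ≤ J ∧ J.IsMaximal} := by
    ext I; simp
  rw [hset]
  change x ∈ Ideal.jacobson (⊥ : Ideal R) ↔ _
  constructor
  · intro hx y
    have h1 : mulLeft k (x * y) = (mulLeft k x) * (mulLeft k y) := by
      rw [mulLeft_mul k R x y, Module.End.mul_eq_comp]
    have h1' : mulLeft k (y * x) = (mulLeft k y) * (mulLeft k x) := by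
      rw [mulLeft_mul k R y x, Module.End.mul_eq_comp]
    have h2 : trace k R (mulLeft k (x * y)) = trace k R (mulLeft k (y * x)) := by
      rw [h1, trace_mul_comm, ← h1']
    have hyx : y * x ∈ Ideal.jacobson (⊥ : Ideal R) := by
      have := Submodule.smul_mem (Ideal.jacobson (⊥ : Ideal R)) y hx
      rwa [smul_eq_mul] at this
    obtain ⟨n, hn⟩ := isNilpotent_of_mem_jacobson hyx
    have hnil : IsNilpotent (mulLeft k (y * x)) :=
      ⟨n, by rw [pow_mulLeft, hn, mulLeft_zero_eq_zero]⟩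
    rw [h2]
    exact (LinearMap.isNilpotent_trace_of_isNilpotent hnil).eq_zero
  · intro h
    have hxw : ∀ w : R, IsNilpotent (x * w) := by
      intro w
      have hnil : IsNilpotent (mulLeft k (x * w)) := by
        apply isNilpotent_of_trace_pow_eq_zero
        intro n
        have he : (x * w) ^ (n + 1) = x * (w * (x * w) ^ n) := by
          rw [pow_succ']; noncomm_ring
        rw [pow_mulLeft, he]
        exact h (w * (x * w) ^ n)
      obtain ⟨n, hn⟩ := hnil
      rw [pow_mulLeft] at hn
      refine ⟨n, ?_⟩
      have := congrArg (fun g : Module.End k R => g 1) hn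
      simpa using this
    rw [Ideal.mem_jacobson_iff]
    intro y
    have hyx : IsNilpotent (y * x) := by
      obtain ⟨n, hn⟩ := hxw y
      refine ⟨n + 1, ?_⟩
      have key : ∀ m : ℕ, (y * x) ^ (m + 1) = y * (x * y) ^ m * x := by
        intro m
        induction m with
        | zero => simp
        | succ m ih => rw [pow_succ, ih, pow_succ]; noncomm_ring
      rw [key n, hn, mul_zero, zero_mul]
    have hu : IsUnit (y * x + 1) := hyx.isUnit_add_one
    obtain ⟨u, hu⟩ := hu
    refine ⟨(↑u⁻¹ : R), ?_⟩
    rw [Ideal.mem_bot]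
    have h1 : (↑u⁻¹ : R) * (y * x + 1) = 1 := by rw [← hu]; exact u.inv_mul
    calc (↑u⁻¹ : R) * y * x + ↑u⁻¹ - 1 = ↑u⁻¹ * (y * x + 1) - 1 := by noncomm_ring
      _ = 0 := by rw [h1, sub_self]
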